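/- The Components-are-Clusters method fails Connectivity: for every non-decreasing non-negative function f tending to infinity, there exists a graph (e.g., one whose component is a tree on n₀ vertices with n₀ ≥ 2 chosen so that f(n₀) ≥ 1) such that the method returns a non-singleton cluster of size n with minimum edge cut size ≤ f(n). -/

import Mathlib

open Finset Filter
open scoped Classical

/-- The edges of `E` crossing between `A` and `B`. -/
noncomputable def cutEdges {V : Type*} [DecidableEq V]
    (E : Finset (Sym2 V)) (A B : Finset V) : Finset (Sym2 V) :=
  E.filter (fun e => ∃ u ∈ A, ∃ v ∈ B, e = s(u, v))

/-- the Components-are-Clusters method fails Connectivity.  For every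
non-negative non-decreasing function `f` tending to infinity, there is a graph with a
connected component `c` (a non-singleton cluster returned by the method) admitting a
bipartition `A, B` whose number of crossing edges is at most `f (|c|)` (e.g. a tree
component on `n₀ ≥ 2` vertices with `f n₀ ≥ 1`, which has a cut edge). -/
theorem stmt_11 (f : ℕ → ℝ) (hmono : Monotone f) (hnonneg : ∀ n, 0 ≤ f n)
    (htop : Tendsto f atTop atTop) :
    ∃ (m : ℕ) (E : Finset (Sym2 (Fin m))) (c A B : Finset (Fin m)),
      (∀ e ∈ E, ¬ e.IsDiag) ∧
      (∀ u ∈ c, ∀ v : Fin m, (SimpleGraph.fromEdgeSet (E : Set (Sym2 (Fin m)))).Adj u v → v ∈ c) ∧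
      (∀ u ∈ c, ∀ v ∈ c, (SimpleGraph.fromEdgeSet (E : Set (Sym2 (Fin m)))).Reachable u v) ∧
      2 ≤ c.card ∧
      A.Nonempty ∧ B.Nonempty ∧ Disjoint A B ∧ A ∪ B = c ∧
      ((cutEdges E A B).card : ℝ) ≤ f c.card := by
  -- pick n₀ with f n₀ ≥ 1 and n₀ ≥ 2
  obtain ⟨N, hN⟩ := Filter.eventually_atTop.mp (htop.eventually_ge_atTop 1)
  obtain ⟨m, hm2, hfm⟩ : ∃ m, 2 ≤ m ∧ 1 ≤ f m :=
    ⟨max N 2, le_max_right _ _, hN _ (le_max_left _ _)⟩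
  have hmpos : 0 < m := by omega
  -- the path graph on m vertices
  let G := SimpleGraph.pathGraph m
  refine ⟨m, G.edgeFinset, Finset.univ, {⟨0, hmpos⟩},
    Finset.univ \ {⟨0, hmpos⟩}, ?_, ?_, ?_, ?_, ?_, ?_, ?_, ?_, ?_⟩
  · intro e he
    exact G.not_isDiag_of_mem_edgeSet (by simpa using he)
  · intro u _ v _; exact Finset.mem_univ v
  · intro u _ v _
    have hc : G.Connected := by
      obtain ⟨k, rfl⟩ : ∃ k, m = k + 1 := ⟨m - 1, by omega⟩
      exact SimpleGraph.pathGraph_connected k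
    have : SimpleGraph.fromEdgeSet ((G.edgeFinset : Finset (Sym2 (Fin m))) :
        Set (Sym2 (Fin m))) = G := by
      rw [SimpleGraph.coe_edgeFinset, SimpleGraph.fromEdgeSet_edgeSet]
    rw [this]
    exact hc.preconnected u v
  · simpa using hm2
  · exact ⟨_, Finset.mem_singleton_self _⟩
  · refine ⟨⟨1, by omega⟩, ?_⟩
    simp [Fin.ext_iff]
  · exact Finset.disjoint_sdiff
  · exact Finset.union_sdiff_of_subset (by simp)
  · -- cut edges ⊆ {s(0,1)}
    have hsub : cutEdges G.edgeFinset {⟨0, hmpos⟩} (Finset.univ \ {⟨0, hmpos⟩})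
        ⊆ {s((⟨0, hmpos⟩ : Fin m), (⟨1, by omega⟩ : Fin m))} := by
      intro e he
      simp only [cutEdges, Finset.mem_filter] at he
      obtain ⟨heE, u, hu, v, hv, rfl⟩ := he
      rw [Finset.mem_singleton] at hu
      subst hu
      have hadj : G.Adj ⟨0, hmpos⟩ v := by
        rw [← SimpleGraph.mem_edgeSet, ← SimpleGraph.mem_edgeFinset]
        exact heE
      rw [SimpleGraph.pathGraph_adj] at hadj
      have hv1 : (v : ℕ) = 1 := by simp at hadj; omega
      have hveq : v = ⟨1, by omega⟩ := Fin.ext hv1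
      rw [Finset.mem_singleton, hveq]
    have hcard : (cutEdges G.edgeFinset {⟨0, hmpos⟩}
        (Finset.univ \ {⟨0, hmpos⟩})).card ≤ 1 := by
      simpa using Finset.card_le_card hsub
    calc ((cutEdges G.edgeFinset {⟨0, hmpos⟩}
          (Finset.univ \ {⟨0, hmpos⟩})).card : ℝ) ≤ 1 := by exact_mod_cast hcard
      _ ≤ f m := hfm
      _ = f (Finset.univ : Finset (Fin m)).card := by simp
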